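/- Let r ≥ 3, 0 ≤ k ≤ n, and let F be a family of k-element subsets of [n] = {1,…,n} containing no 1-focal family of size r. Then |F| ≤ (r−1)·C(n, ⌈(r−2)k/(r−1)⌉) / C(k, ⌈(r−2)k/(r−1)⌉), where C(·,·) denotes the binomial coefficient. -/

import Mathlib

section AuxOneFocal


open Finset

variable {n : ℕ}

/-- Ordered `j`-tuples of pairwise disjoint `u`-element subsets of `G`. -/
def disjTuples (u : ℕ) (G : Finset (Fin n)) (j : ℕ) : Finset (Fin j → Finset (Fin n)) :=
  Finset.univ.filter (fun V => (∀ i, V i ⊆ G ∧ (V i).card = u) ∧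
    ∀ i i', i ≠ i' → Disjoint (V i) (V i'))

lemma mem_disjTuples {u : ℕ} {G : Finset (Fin n)} {j : ℕ} {V : Fin j → Finset (Fin n)} :
    V ∈ disjTuples u G j ↔ (∀ i, V i ⊆ G ∧ (V i).card = u) ∧
      ∀ i i', i ≠ i' → Disjoint (V i) (V i') := by
  simp [disjTuples]

/-- Number of ordered `j`-tuples of pairwise disjoint `u`-subsets of an `m`-set. -/
def ftup (u : ℕ) : ℕ → ℕ → ℕ
  | _, 0 => 1
  | m, (j+1) => m.choose u * ftup u (m - u) j

lemma ftup_pos (u : ℕ) : ∀ (j m : ℕ), j * u ≤ m → 0 < ftup u m j := by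
  intro j
  induction j with
  | zero => intro m _; simp [ftup]
  | succ j ih =>
    intro m hm
    rw [Nat.succ_mul] at hm
    have hu : u ≤ m := by omega
    have h1 : 0 < m.choose u := Nat.choose_pos hu
    have h2 : 0 < ftup u (m - u) j := ih _ (by omega)
    rw [ftup]
    exact Nat.mul_pos h1 h2

lemma fiber_card (u j : ℕ) (G U : Finset (Fin n)) (hU : U ⊆ G) (hUc : U.card = u) :
    ((disjTuples u G (j+1)).filter (fun V => V 0 = U)).card
      = (disjTuples u (G \ U) j).card := by
  apply Finset.card_bij' (fun V _ => V ∘ Fin.succ) (fun W _ => Fin.cons U W)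
  · -- forward membership
    intro V hV
    rw [mem_filter] at hV
    obtain ⟨hV, hV0⟩ := hV
    rw [mem_disjTuples] at hV ⊢
    refine ⟨fun i => ⟨?_, (hV.1 i.succ).2⟩, fun i i' hne => hV.2 _ _ (by simpa using hne)⟩
    rw [Finset.subset_sdiff]
    refine ⟨(hV.1 i.succ).1, ?_⟩
    rw [← hV0]
    exact hV.2 i.succ 0 (Fin.succ_ne_zero i)
  · -- backward membership
    intro W hW
    rw [mem_disjTuples] at hW
    rw [mem_filter, mem_disjTuples]
    refine ⟨⟨fun i => ?_, fun i i' hne => ?_⟩, Fin.cons_zero _ _⟩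
    · refine Fin.cases ?_ (fun i' => ?_) i
      · simpa using ⟨hU, hUc⟩
      · simp only [Fin.cons_succ]
        exact ⟨le_trans (hW.1 i').1 (sdiff_subset), (hW.1 i').2⟩
    · refine Fin.cases (fun i' hne => ?_) (fun i0 i' hne => ?_) i i' hne
      · -- i = 0
        refine Fin.cases ?_ (fun i'' _ => ?_) i' hne
        · intro h; exact absurd rfl h
        · simp only [Fin.cons_zero, Fin.cons_succ]
          exact Disjoint.mono_right (hW.1 i'').1 Finset.disjoint_sdiff
      · refine Fin.cases ?_ (fun i'' hne => ?_) i' hne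
        · intro _
          simp only [Fin.cons_zero, Fin.cons_succ]
          exact Disjoint.mono_left (hW.1 i0).1 Finset.sdiff_disjoint
        · simp only [Fin.cons_succ]
          exact hW.2 _ _ (by simpa using hne)
  · intro V hV
    rw [mem_filter] at hV
    rw [← hV.2]
    exact Fin.cons_self_tail V
  · intro W hW
    funext i
    simp [Fin.cons_succ, Function.comp]
lemma disjTuples_card (u : ℕ) : ∀ (j : ℕ) (G : Finset (Fin n)),
    (disjTuples u G j).card = ftup u G.card j := by
  intro j
  induction j with
  | zero =>
    intro G
    rw [ftup]
    rw [Finset.card_eq_one]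
    refine ⟨(fun i => Fin.elim0 i), ?_⟩
    ext V
    simp only [mem_disjTuples, Finset.mem_singleton]
    constructor
    · intro _; funext i; exact Fin.elim0 i
    · intro h; exact ⟨fun i => Fin.elim0 i, fun i => Fin.elim0 i⟩
  | succ j ih =>
    intro G
    rw [Finset.card_eq_sum_card_fiberwise
      (f := fun V => V 0) (t := G.powersetCard u) ?_]
    · rw [Finset.sum_congr rfl (fun U hU => ?_)]
      · rw [Finset.sum_const, Finset.card_powersetCard, smul_eq_mul, ftup]
      · rw [Finset.mem_powersetCard] at hU
        rw [fiber_card u j G U hU.1 hU.2, ih, Finset.card_sdiff_of_subset hU.1, hU.2]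
    · intro V hV
      rw [Finset.mem_coe, mem_disjTuples] at hV
      rw [Finset.mem_coe, Finset.mem_powersetCard]
      exact hV.1 0
lemma hits0_card (u j : ℕ) (G : Finset (Fin n)) (H : Finset (Finset (Fin n)))
    (hH : ∀ U ∈ H, U ⊆ G ∧ U.card = u) :
    ((disjTuples u G (j+1)).filter (fun V => V 0 ∈ H)).card
      = H.card * ftup u (G.card - u) j := by
  rw [Finset.card_eq_sum_card_fiberwise (f := fun V => V 0) (t := H) ?_]
  · rw [Finset.sum_congr rfl (fun U hU => ?_)]
    · rw [Finset.sum_const, smul_eq_mul]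
    · rw [Finset.filter_filter]
      have hpred : ∀ V : Fin (j+1) → Finset (Fin n), (V 0 ∈ H ∧ V 0 = U) ↔ V 0 = U := by
        intro V
        constructor
        · exact fun h => h.2
        · intro h; exact ⟨h ▸ hU, h⟩
      rw [Finset.filter_congr (fun V _ => hpred V)]
      rw [fiber_card u j G U (hH U hU).1 (hH U hU).2, disjTuples_card,
        Finset.card_sdiff_of_subset (hH U hU).1, (hH U hU).2]
  · intro V hV
    exact (Finset.mem_filter.mp hV).2

lemma hits_card (u j : ℕ) (G : Finset (Fin n)) (H : Finset (Finset (Fin n)))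
    (hH : ∀ U ∈ H, U ⊆ G ∧ U.card = u) (i : Fin (j+1)) :
    ((disjTuples u G (j+1)).filter (fun V => V i ∈ H)).card
      = H.card * ftup u (G.card - u) j := by
  rw [← hits0_card u j G H hH]
  apply Finset.card_bij' (fun V _ => V ∘ (Equiv.swap 0 i)) (fun W _ => W ∘ (Equiv.swap 0 i))
  · intro V hV
    rw [Finset.mem_filter, mem_disjTuples] at hV ⊢
    obtain ⟨⟨h1, h2⟩, h3⟩ := hV
    refine ⟨⟨fun i' => h1 _, fun a b hne => h2 _ _ (fun h => hne ((Equiv.swap 0 i).injective h))⟩, ?_⟩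
    simpa [Equiv.swap_apply_left] using h3
  · intro W hW
    rw [Finset.mem_filter, mem_disjTuples] at hW ⊢
    obtain ⟨⟨h1, h2⟩, h3⟩ := hW
    refine ⟨⟨fun i' => h1 _, fun a b hne => h2 _ _ (fun h => hne ((Equiv.swap 0 i).injective h))⟩, ?_⟩
    simpa [Equiv.swap_apply_right] using h3
  · intro V _; funext x; simp [Function.comp, Equiv.swap_apply_self]
  · intro W _; funext x; simp [Function.comp, Equiv.swap_apply_self]
lemma no_disj_family_bound (u s : ℕ) (hs : 0 < s) (G : Finset (Fin n))
    (H : Finset (Finset (Fin n))) (hH : ∀ U ∈ H, U ⊆ G ∧ U.card = u)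
    (hground : s * u ≤ G.card)
    (hno : ¬ ∃ V : Fin s → Finset (Fin n),
      (∀ i, V i ∈ H) ∧ ∀ i i', i ≠ i' → Disjoint (V i) (V i')) :
    s * H.card ≤ (s - 1) * G.card.choose u := by
  obtain ⟨j, rfl⟩ : ∃ j, s = j + 1 := ⟨s - 1, by omega⟩
  set D := disjTuples u G (j+1) with hD
  have key : ∑ i : Fin (j+1), (D.filter (fun V => V i ∈ H)).card ≤ j * D.card := by
    have h1 : ∀ i : Fin (j+1), (D.filter (fun V => V i ∈ H)).card
        = ∑ V ∈ D, if V i ∈ H then 1 else 0 := by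
      intro i; rw [Finset.card_filter]
    rw [Finset.sum_congr rfl (fun i _ => h1 i), Finset.sum_comm]
    have h2 : ∀ V ∈ D, (∑ i : Fin (j+1), if V i ∈ H then 1 else 0) ≤ j := by
      intro V hV
      rw [← Finset.card_filter]
      by_contra hcon
      push_neg at hcon
      have hle : (Finset.univ.filter (fun i => V i ∈ H)).card ≤ j + 1 := by
        calc (Finset.univ.filter (fun i => V i ∈ H)).card
            ≤ (Finset.univ : Finset (Fin (j+1))).card := Finset.card_filter_le _ _
          _ = j + 1 := by simp
      have hcard : (Finset.univ.filter (fun i => V i ∈ H)).card = j + 1 := by omega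
      have huniv : (Finset.univ.filter (fun i => V i ∈ H)) = Finset.univ := by
        apply Finset.eq_univ_of_card
        simpa using hcard
      have hall : ∀ i : Fin (j+1), V i ∈ H := by
        intro i
        have : i ∈ Finset.univ.filter (fun i => V i ∈ H) := huniv.symm ▸ Finset.mem_univ i
        exact (Finset.mem_filter.mp this).2
      rw [mem_disjTuples] at hV
      exact hno ⟨V, hall, hV.2⟩
    calc ∑ V ∈ D, ∑ i : Fin (j+1), (if V i ∈ H then 1 else 0)
        ≤ ∑ V ∈ D, j := Finset.sum_le_sum h2
      _ = D.card * j := by rw [Finset.sum_const, smul_eq_mul]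
      _ = j * D.card := Nat.mul_comm _ _
  have hhits : ∀ i : Fin (j+1), (D.filter (fun V => V i ∈ H)).card
      = H.card * ftup u (G.card - u) j := fun i => hits_card u j G H hH i
  rw [Finset.sum_congr rfl (fun i _ => hhits i), Finset.sum_const, smul_eq_mul,
    Finset.card_univ, Fintype.card_fin] at key
  rw [hD, disjTuples_card, ftup] at key
  have hf : 0 < ftup u (G.card - u) j := ftup_pos u j _ (by
    rw [Nat.succ_mul] at hground; omega)
  have key2 : ((j+1) * H.card) * ftup u (G.card - u) j
      ≤ (j * G.card.choose u) * ftup u (G.card - u) j := by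
    calc ((j+1) * H.card) * ftup u (G.card - u) j
        = (j+1) * (H.card * ftup u (G.card - u) j) := by ring
      _ ≤ j * (G.card.choose u * ftup u (G.card - u) j) := key
      _ = (j * G.card.choose u) * ftup u (G.card - u) j := by ring
  have := Nat.le_of_mul_le_mul_right key2 hf
  simpa using this


lemma ceil_eq_sub_div (r k : ℕ) (hr : 3 ≤ r) :
    ⌈(((r : ℚ) - 2) * k) / ((r : ℚ) - 1)⌉₊ = k - k / (r - 1) := by
  set s := r - 1 with hsdef
  have hs0 : 0 < s := by omega
  have hsq : ((s : ℚ)) = (r : ℚ) - 1 := by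
    rw [hsdef]; push_cast [Nat.cast_sub (by omega : 1 ≤ r)]; ring
  have hq : (((r : ℚ) - 2) * k) / ((r : ℚ) - 1) = (k : ℚ) - (k : ℚ) / (s : ℚ) := by
    rw [← hsq]
    have h2 : (r : ℚ) - 2 = (s : ℚ) - 1 := by rw [hsq]; ring
    rw [h2]
    have hsne : (s : ℚ) ≠ 0 := by exact_mod_cast hs0.ne'
    field_simp
  rw [hq]
  rcases Nat.eq_zero_or_pos k with hk0 | hk0
  · subst hk0; simp
  · have hdivlt : k / s < k := Nat.div_lt_self hk0 (by omega)
    have hub : (k : ℚ) - (k : ℚ) / (s : ℚ) ≤ ((k - k / s : ℕ) : ℚ) := by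
      have h1 : ((k / s : ℕ) : ℚ) ≤ (k : ℚ) / (s : ℚ) := Nat.cast_div_le
      rw [Nat.cast_sub (le_of_lt hdivlt)]
      linarith
    have hlb : ((k - k / s : ℕ) : ℚ) - 1 < (k : ℚ) - (k : ℚ) / (s : ℚ) := by
      have h2n : k < (k / s + 1) * s := by
        have e := Nat.div_add_mod k s
        have m := Nat.mod_lt k hs0
        calc k = s * (k / s) + k % s := e.symm
          _ < s * (k / s) + s := by omega
          _ = (k / s + 1) * s := by ring
      have hspos : (0 : ℚ) < (s : ℚ) := by exact_mod_cast hs0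
      have h2 : (k : ℚ) < (((k / s : ℕ) : ℚ) + 1) * (s : ℚ) := by exact_mod_cast h2n
      have h3 : (k : ℚ) / (s : ℚ) < ((k / s : ℕ) : ℚ) + 1 := (div_lt_iff₀ hspos).mpr h2
      rw [Nat.cast_sub (le_of_lt hdivlt)]
      linarith
    have h5 : ⌈(k : ℚ) - (k : ℚ) / (s : ℚ)⌉₊ ≤ k - k / s := Nat.ceil_le.mpr hub
    have h4 : k - k / s - 1 < ⌈(k : ℚ) - (k : ℚ) / (s : ℚ)⌉₊ := by
      rw [Nat.lt_ceil]
      have : ((k - k / s - 1 : ℕ) : ℚ) = ((k - k / s : ℕ) : ℚ) - 1 := by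
        rw [Nat.cast_sub (by omega : 1 ≤ k - k / s)]; norm_num
      rw [this]
      exact hlb
    omega

end AuxOneFocal


/-- A family consisting of a focus set `A₀` and `m` further sets `As 0, …, As (m-1)`
(viewed as subsets of `[n]`, i.e. characteristic vectors in `{0,1}^n`) is *1-focal with
focus `A₀`* if for every `i ∈ A₀`, at most one of the sets `As j` misses `i`
(equivalently, at least `m - 1` of the `m` characteristic-vector entries equal `1`). -/
def IsOneFocalWithFocus {n m : ℕ} (A₀ : Finset (Fin n)) (As : Fin m → Finset (Fin n)) : Prop :=
  ∀ i ∈ A₀, ∀ j j' : Fin m, i ∉ As j → i ∉ As j' → j = j'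

/-- A family `F` of subsets of `[n]` contains a 1-focal family of size `r` if some `r`
distinct members `A₀, As 0, …, As (r-2)` of `F` are 1-focal with focus `A₀`. -/
def ContainsOneFocalFamily {n : ℕ} (F : Finset (Finset (Fin n))) (r : ℕ) : Prop :=
  ∃ A₀ ∈ F, ∃ As : Fin (r - 1) → Finset (Fin n),
    (∀ j, As j ∈ F) ∧ Function.Injective As ∧ (∀ j, As j ≠ A₀) ∧ IsOneFocalWithFocus A₀ As

/-- If `F` is a family of `k`-element subsets of `[n]` containing no 1-focal family of
size `r`, then `|F| ≤ (r-1)·C(n,⌈(r-2)k/(r-1)⌉)/C(k,⌈(r-2)k/(r-1)⌉)`. -/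
theorem one_focal_uniform_upper_bound (r n k : ℕ) (hr : 3 ≤ r) (hk : k ≤ n)
    (F : Finset (Finset (Fin n))) (hunif : ∀ A ∈ F, A.card = k)
    (hF : ¬ ContainsOneFocalFamily F r) :
    (F.card : ℝ) ≤
      ((r : ℝ) - 1) * (n.choose ⌈(((r : ℚ) - 2) * k) / ((r : ℚ) - 1)⌉₊ : ℝ)
        / (k.choose ⌈(((r : ℚ) - 2) * k) / ((r : ℚ) - 1)⌉₊ : ℝ) := by
  rw [ceil_eq_sub_div r k hr]
  set s := r - 1 with hsdef
  have hs2 : 2 ≤ s := by omega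
  set u := k / s with hudef
  set t := k - u with htdef
  have hus : s * u ≤ k := by rw [hudef, Nat.mul_comm]; exact Nat.div_mul_le_self k s
  have hut : u ≤ k := Nat.div_le_self k s
  have htk : t ≤ k := by rw [htdef]; exact Nat.sub_le k u
  have hct : k.choose t = k.choose u := by rw [htdef]; exact Nat.choose_symm hut
  -- private t-subsets of a member
  set Pt : Finset (Fin n) → Finset (Finset (Fin n)) :=
    fun A => (A.powersetCard t).filter (fun T => ∀ B ∈ F, T ⊆ B → B = A) with hPtdef
  -- Key 1 : each member has many private t-subsets
  have key1 : ∀ A₀ ∈ F, k.choose u ≤ s * (Pt A₀).card := by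
    intro A₀ hA
    have hAk : A₀.card = k := hunif A₀ hA
    set Cv : Finset (Finset (Fin n)) :=
      (A₀.powersetCard t).filter (fun T => ¬ ∀ B ∈ F, T ⊆ B → B = A₀) with hCvdef
    have hsplit : (Pt A₀).card + Cv.card = k.choose t := by
      rw [hPtdef, hCvdef, Finset.card_filter_add_card_filter_not,
        Finset.card_powersetCard, hAk]
    set H : Finset (Finset (Fin n)) := Cv.image (fun T => A₀ \ T) with hHdef
    have hHmem : ∀ U ∈ H, U ⊆ A₀ ∧ U.card = u := by
      intro U hU
      rw [hHdef, Finset.mem_image] at hU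
      obtain ⟨T, hT, rfl⟩ := hU
      have hT' := Finset.mem_powersetCard.mp (Finset.mem_filter.mp hT).1
      refine ⟨Finset.sdiff_subset, ?_⟩
      rw [Finset.card_sdiff_of_subset hT'.1, hT'.2, hAk, htdef]
      exact Nat.sub_sub_self hut
    have hHcard : H.card = Cv.card := by
      rw [hHdef]
      apply Finset.card_image_of_injOn
      intro T₁ hT₁ T₂ hT₂ heq
      have h1 := (Finset.mem_powersetCard.mp (Finset.mem_filter.mp hT₁).1).1
      have h2 := (Finset.mem_powersetCard.mp (Finset.mem_filter.mp hT₂).1).1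
      have := congrArg (fun X => A₀ \ X) heq
      simpa [Finset.sdiff_sdiff_eq_self h1, Finset.sdiff_sdiff_eq_self h2] using this
    have hno : ¬ ∃ V : Fin s → Finset (Fin n),
        (∀ i, V i ∈ H) ∧ ∀ i i', i ≠ i' → Disjoint (V i) (V i') := by
      rintro ⟨V, hVH, hVdisj⟩
      have hex : ∀ i : Fin s, ∃ T, T ∈ Cv ∧ A₀ \ T = V i := by
        intro i
        have := hVH i
        rw [hHdef, Finset.mem_image] at this
        obtain ⟨T, hT, hTe⟩ := this
        exact ⟨T, hT, hTe⟩
      choose T hTCv hTV using hex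
      have hTcov : ∀ i, ∃ B, B ∈ F ∧ T i ⊆ B ∧ B ≠ A₀ := by
        intro i
        have h := (Finset.mem_filter.mp (hTCv i)).2
        push_neg at h
        obtain ⟨B, hBF, hTB, hBne⟩ := h
        exact ⟨B, hBF, hTB, hBne⟩
      choose B hBF hTB hBne using hTcov
      have hmiss : ∀ i, A₀ \ B i ⊆ V i := by
        intro i
        rw [← hTV i]
        exact Finset.sdiff_subset_sdiff (Finset.Subset.refl _) (hTB i)
      apply hF
      refine ⟨A₀, hA, B, hBF, ?_, hBne, ?_⟩
      · -- injectivity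
        intro i i' heq
        by_contra hne
        have hdisj := hVdisj i i' hne
        have hcover : A₀ ⊆ B i := by
          intro x hx
          by_contra hxB
          have h1 : x ∈ V i := hmiss i (Finset.mem_sdiff.mpr ⟨hx, hxB⟩)
          have h2 : x ∈ V i' := hmiss i' (Finset.mem_sdiff.mpr ⟨hx, by rw [← heq]; exact hxB⟩)
          exact (Finset.disjoint_left.mp hdisj h1) h2
        have hcard : (B i).card ≤ A₀.card := by rw [hunif _ (hBF i), hAk]
        exact hBne i (Finset.eq_of_subset_of_card_le hcover hcard).symm
      · -- focality
        intro x hx j j' hj hj'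
        by_contra hne
        have h1 : x ∈ V j := hmiss j (Finset.mem_sdiff.mpr ⟨hx, hj⟩)
        have h2 : x ∈ V j' := hmiss j' (Finset.mem_sdiff.mpr ⟨hx, hj'⟩)
        exact (Finset.disjoint_left.mp (hVdisj j j' hne) h1) h2
    have hbnd := no_disj_family_bound u s (by omega) A₀ H hHmem (by rw [hAk]; exact hus) hno
    rw [hAk, hHcard] at hbnd
    have e1 : s * (Pt A₀).card + s * Cv.card = s * k.choose u := by
      rw [← Nat.mul_add, hsplit, hct]
    have e3 : (s - 1) * k.choose u + k.choose u = s * k.choose u := by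
      have hs1 : s - 1 + 1 = s := by omega
      calc (s - 1) * k.choose u + k.choose u = (s - 1 + 1) * k.choose u := by ring
        _ = s * k.choose u := by rw [hs1]
    have e4 : s * (Pt A₀).card + s * Cv.card = (s - 1) * k.choose u + k.choose u := by
      rw [e1, e3]
    omega
  -- Key 2 : private subsets of distinct members are distinct
  have hdisjPt : ∀ A ∈ F, ∀ A' ∈ F, A ≠ A' → Disjoint (Pt A) (Pt A') := by
    intro A hA A' hA' hne
    rw [Finset.disjoint_left]
    intro T hT hT'
    have hpriv := (Finset.mem_filter.mp hT).2
    have hsub' := (Finset.mem_powersetCard.mp (Finset.mem_filter.mp hT').1).1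
    exact hne (hpriv A' hA' hsub').symm
  have hsum : ∑ A ∈ F, (Pt A).card = (F.biUnion Pt).card := (Finset.card_biUnion hdisjPt).symm
  have hbound : (F.biUnion Pt).card ≤ n.choose t := by
    have hsub : F.biUnion Pt ⊆ (Finset.univ : Finset (Fin n)).powersetCard t := by
      intro T hT
      rw [Finset.mem_biUnion] at hT
      obtain ⟨A, hA, hTA⟩ := hT
      have h := Finset.mem_powersetCard.mp (Finset.mem_filter.mp hTA).1
      exact Finset.mem_powersetCard.mpr ⟨Finset.subset_univ _, h.2⟩
    calc (F.biUnion Pt).card ≤ ((Finset.univ : Finset (Fin n)).powersetCard t).card :=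
          Finset.card_le_card hsub
      _ = n.choose t := by rw [Finset.card_powersetCard, Finset.card_univ, Fintype.card_fin]
  have main : F.card * k.choose t ≤ s * n.choose t := by
    calc F.card * k.choose t = ∑ _A ∈ F, k.choose t := by
          rw [Finset.sum_const, smul_eq_mul]
      _ = ∑ A ∈ F, k.choose u := by rw [hct]
      _ ≤ ∑ A ∈ F, s * (Pt A).card := Finset.sum_le_sum key1
      _ = s * ∑ A ∈ F, (Pt A).card := by rw [Finset.mul_sum]
      _ = s * (F.biUnion Pt).card := by rw [hsum]
      _ ≤ s * n.choose t := Nat.mul_le_mul_left s hbound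
  -- conclude over ℝ
  have hchpos : (0 : ℝ) < (k.choose t : ℝ) := by exact_mod_cast Nat.choose_pos htk
  rw [le_div_iff₀ hchpos]
  have hrs : ((s : ℕ) : ℝ) = (r : ℝ) - 1 := by
    rw [hsdef]; push_cast [Nat.cast_sub (by omega : 1 ≤ r)]; ring
  calc (F.card : ℝ) * (k.choose t : ℝ) = ((F.card * k.choose t : ℕ) : ℝ) := by push_cast; ring
    _ ≤ ((s * n.choose t : ℕ) : ℝ) := by exact_mod_cast main
    _ = ((r : ℝ) - 1) * (n.choose t : ℝ) := by push_cast [← hrs]; ring
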